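/- Let E be a real Hilbert space, A bounded self-adjoint positive semidefinite with E_∞ = ker A, P the orthogonal projection onto E_∞, and k : E → E a map which is Fréchet differentiable at u_∞ ∈ E_∞ and satisfies: whenever λₙ → ∞, (uₙ) with sup‖uₙ‖_{λₙ} < ∞ and uₙ ⇀ u, then Dk(u_∞)[uₙ] → Dk(u_∞)[u] strongly. Then ‖Dk_λ(u_∞) − (Dk_∞(u_∞))∘P‖_λ → 0 as λ → ∞, where Dk_λ(u_∞) is the ⟨·,·⟩_λ-representative of Dk(u_∞) (i.e., ⟨Dk_λ(u_∞)v, w⟩_λ = ⟨Dk(u_∞)v, w⟩) and Dk_∞(u_∞) = P∘Dk(u_∞)|_{E_∞}. -/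

import Mathlib

open scoped InnerProductSpace
open Filter

section Aux
variable {E : Type*} [NormedAddCommGroup E] [InnerProductSpace ℝ E] [CompleteSpace E]

lemma semi_cs (A : E →L[ℝ] E) (hA_sa : ∀ u v : E, ⟪A u, v⟫_ℝ = ⟪u, A v⟫_ℝ)
    (hA_pos : ∀ u : E, 0 ≤ ⟪A u, u⟫_ℝ) (x y : E) :
    ⟪A x, y⟫_ℝ ^ 2 ≤ ⟪A x, x⟫_ℝ * ⟪A y, y⟫_ℝ := by
  have hd : discrim (⟪A y, y⟫_ℝ) (2 * ⟪A x, y⟫_ℝ) (⟪A x, x⟫_ℝ) ≤ 0 := by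
    apply discrim_le_zero
    intro t
    have h := hA_pos (x + t • y)
    have hyx : ⟪A y, x⟫_ℝ = ⟪A x, y⟫_ℝ := by
      rw [hA_sa y x, real_inner_comm]
    simp only [map_add, map_smul, inner_add_left, inner_add_right,
      inner_smul_left, inner_smul_right, real_inner_smul_left,
      real_inner_smul_right, conj_trivial] at h
    rw [hyx] at h
    ring_nf
    ring_nf at h
    nlinarith [h]
  rw [discrim] at hd
  nlinarith [hd]

lemma weak_bw (v : ℕ → E) (C : ℝ) (hv : ∀ n, ‖v n‖ ≤ C) :
    ∃ (v₀ : E) (φ : ℕ → ℕ), StrictMono φ ∧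
      ∀ w : E, Tendsto (fun n => ⟪v (φ n), w⟫_ℝ) atTop (nhds ⟪v₀, w⟫_ℝ) := by
  have hC : 0 ≤ C := le_trans (norm_nonneg (v 0)) (hv 0)
  set g : ℕ → (ℕ → ℝ) := fun n m => ⟪v n, v m⟫_ℝ with hg
  have hgmem : ∀ n, g n ∈ Set.univ.pi (fun m => Set.Icc (-(C * ‖v m‖)) (C * ‖v m‖)) := by
    intro n m _
    have h1 : |⟪v n, v m⟫_ℝ| ≤ ‖v n‖ * ‖v m‖ := abs_real_inner_le_norm _ _
    have h2 : ‖v n‖ * ‖v m‖ ≤ C * ‖v m‖ :=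
      mul_le_mul_of_nonneg_right (hv n) (norm_nonneg _)
    constructor
    · linarith [neg_abs_le (⟪v n, v m⟫_ℝ), abs_nonneg (⟪v n, v m⟫_ℝ)]
    · linarith [le_abs_self (⟪v n, v m⟫_ℝ)]
  obtain ⟨L, -, φ, hφ, hL⟩ :=
    (isCompact_univ_pi (fun m => isCompact_Icc)).tendsto_subseq hgmem
  rw [tendsto_pi_nhds] at hL
  set S : Submodule ℝ E := (Submodule.span ℝ (Set.range v)).topologicalClosure with hS
  haveI : CompleteSpace S :=
    (Submodule.isClosed_topologicalClosure _).completeSpace_coe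
  have hvS : ∀ n, v n ∈ S := fun n =>
    Submodule.le_topologicalClosure _ (Submodule.subset_span ⟨n, rfl⟩)
  have hspan : ∀ w ∈ Submodule.span ℝ (Set.range v),
      ∃ l : ℝ, Tendsto (fun n => ⟪v (φ n), w⟫_ℝ) atTop (nhds l) := by
    intro w hw
    induction hw using Submodule.span_induction with
    | mem x hx =>
        obtain ⟨m, rfl⟩ := hx
        exact ⟨L m, hL m⟩
    | zero => exact ⟨0, by simp⟩
    | add x y hx hy ihx ihy =>
        obtain ⟨lx, hlx⟩ := ihx; obtain ⟨ly, hly⟩ := ihy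
        exact ⟨lx + ly, by simpa [inner_add_right] using hlx.add hly⟩
    | smul a x hx ihx =>
        obtain ⟨lx, hlx⟩ := ihx
        exact ⟨a * lx, by simpa [real_inner_smul_right] using hlx.const_mul a⟩
  have hconv : ∀ w : E, ∃ l : ℝ, Tendsto (fun n => ⟪v (φ n), w⟫_ℝ) atTop (nhds l) := by
    intro w
    set w' : E := (S.orthogonalProjectionOnto w : E) with hw'
    have hw'w : ∀ n, ⟪v n, w⟫_ℝ = ⟪v n, w'⟫_ℝ := by
      intro n
      have hmem : w - w' ∈ Sᗮ := S.sub_starProjection_mem_orthogonal w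
      have := (Submodule.mem_orthogonal S (w - w')).mp hmem (v n) (hvS n)
      have h2 : ⟪v n, w⟫_ℝ - ⟪v n, w'⟫_ℝ = 0 := by
        rw [← inner_sub_right]; exact this
      linarith
    have hw'S : w' ∈ S := SetLike.coe_mem _
    have hcauchy : CauchySeq (fun n => ⟪v (φ n), w'⟫_ℝ) := by
      rw [Metric.cauchySeq_iff]
      intro ε hε
      have : w' ∈ closure ((Submodule.span ℝ (Set.range v) : Submodule ℝ E) : Set E) := hw'S
      rw [Metric.mem_closure_iff] at this
      obtain ⟨y, hy, hyd⟩ := this (ε / (3 * (C + 1))) (by positivity)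
      obtain ⟨l, hl⟩ := hspan y hy
      have hcy : CauchySeq (fun n => ⟪v (φ n), y⟫_ℝ) := hl.cauchySeq
      rw [Metric.cauchySeq_iff] at hcy
      obtain ⟨N, hN⟩ := hcy (ε / 3) (by positivity)
      refine ⟨N, fun m hm n hn => ?_⟩
      have hkey : ∀ k, dist (⟪v (φ k), w'⟫_ℝ) (⟪v (φ k), y⟫_ℝ) ≤ ε / 3 := by
        intro k
        rw [Real.dist_eq, ← inner_sub_right]
        calc |⟪v (φ k), w' - y⟫_ℝ| ≤ ‖v (φ k)‖ * ‖w' - y‖ := abs_real_inner_le_norm _ _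
          _ ≤ C * (ε / (3 * (C + 1))) := by
              apply mul_le_mul (hv _) _ (norm_nonneg _) hC
              rw [← dist_eq_norm]; exact le_of_lt hyd
          _ ≤ (C + 1) * (ε / (3 * (C + 1))) :=
              mul_le_mul_of_nonneg_right (by linarith) (by positivity)
          _ = ε / 3 := by field_simp
      calc dist (⟪v (φ m), w'⟫_ℝ) (⟪v (φ n), w'⟫_ℝ)
          ≤ dist (⟪v (φ m), w'⟫_ℝ) (⟪v (φ m), y⟫_ℝ) +
            dist (⟪v (φ m), y⟫_ℝ) (⟪v (φ n), y⟫_ℝ) +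
            dist (⟪v (φ n), y⟫_ℝ) (⟪v (φ n), w'⟫_ℝ) := dist_triangle4 _ _ _ _
        _ < ε / 3 + ε / 3 + ε / 3 := by
            have h0 := hN m hm n hn
            have h1 := hkey m
            have h2 := hkey n
            rw [dist_comm] at h2
            linarith
        _ = ε := by ring
    obtain ⟨l, hl⟩ := cauchySeq_tendsto_of_complete hcauchy
    exact ⟨l, by simpa only [hw'w] using hl⟩
  choose f hf using hconv
  have hadd : ∀ w₁ w₂, f (w₁ + w₂) = f w₁ + f w₂ := fun w₁ w₂ =>
    tendsto_nhds_unique (hf (w₁ + w₂))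
      (by simpa [inner_add_right] using (hf w₁).add (hf w₂))
  have hsmul : ∀ (a : ℝ) w, f (a • w) = a * f w := fun a w =>
    tendsto_nhds_unique (hf (a • w))
      (by simpa [real_inner_smul_right] using (hf w).const_mul a)
  have hbound : ∀ w, ‖f w‖ ≤ C * ‖w‖ := by
    intro w
    have : Tendsto (fun n => |⟪v (φ n), w⟫_ℝ|) atTop (nhds |f w|) := (hf w).abs
    refine le_of_tendsto this (Eventually.of_forall fun n => ?_)
    calc |⟪v (φ n), w⟫_ℝ| ≤ ‖v (φ n)‖ * ‖w‖ := abs_real_inner_le_norm _ _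
      _ ≤ C * ‖w‖ := mul_le_mul_of_nonneg_right (hv _) (norm_nonneg _)
  set F : E →L[ℝ] ℝ :=
    LinearMap.mkContinuous
      { toFun := f, map_add' := hadd, map_smul' := hsmul } C hbound
  refine ⟨(InnerProductSpace.toDual ℝ E).symm F, φ, hφ, fun w => ?_⟩
  have : ⟪(InnerProductSpace.toDual ℝ E).symm F, w⟫_ℝ = F w :=
    InnerProductSpace.toDual_symm_apply
  rw [this]
  exact hf w

end Aux

set_option maxHeartbeats 1000000 in
/-- Lemma 4.4 of the paper: under condition (J₅), the `λ`-operator norm of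
`Dk_λ(u_∞) − Dk_∞(u_∞)∘P` tends to `0` as `λ → ∞`, where `Dk_λ(u_∞)` is the
`⟨·,·⟩_λ`-representative of `Dk(u_∞)` and `Dk_∞(u_∞) = P∘Dk(u_∞)|_{E_∞}`.
(The operator norm estimate is expressed pointwise in the `λ`-norm.) -/
theorem stmt_19 {E : Type*} [NormedAddCommGroup E] [InnerProductSpace ℝ E] [CompleteSpace E]
    (A : E →L[ℝ] E)
    (hA_sa : ∀ u v : E, ⟪A u, v⟫_ℝ = ⟪u, A v⟫_ℝ)
    (hA_pos : ∀ u : E, 0 ≤ ⟪A u, u⟫_ℝ)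
    (K : Submodule ℝ E) (hKer : ∀ v : E, v ∈ K ↔ A v = 0)
    (P : E →L[ℝ] E)
    (hP_mem : ∀ u : E, P u ∈ K)
    (hP_id : ∀ u ∈ K, P u = u)
    (hP_sa : ∀ u v : E, ⟪P u, v⟫_ℝ = ⟪u, P v⟫_ℝ)
    (k : E → E) (ulim : E) (hulim : ulim ∈ K)
    (T : E →L[ℝ] E) (hT : HasFDerivAt k T ulim)
    -- condition (J₅)
    (hJ5 : ∀ (lam : ℕ → ℝ) (v : ℕ → E) (v₀ : E) (Cb : ℝ),
      Tendsto lam atTop atTop →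
      (∀ n, Real.sqrt (‖v n‖ ^ 2 + lam n * ⟪A (v n), v n⟫_ℝ) ≤ Cb) →
      (∀ w : E, Tendsto (fun n => ⟪v n, w⟫_ℝ) atTop (nhds ⟪v₀, w⟫_ℝ)) →
      Tendsto (fun n => T (v n)) atTop (nhds (T v₀)))
    (Tlam : ℝ → E →L[ℝ] E)
    (hrep : ∀ l : ℝ, 0 ≤ l → ∀ v w : E,
      ⟪Tlam l v, w⟫_ℝ + l * ⟪A (Tlam l v), w⟫_ℝ = ⟪T v, w⟫_ℝ) :
    ∀ ε > 0, ∃ Λ > 0, ∀ l ≥ Λ, ∀ v : E,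
      Real.sqrt (‖Tlam l v - P (T (P v))‖ ^ 2 +
          l * ⟪A (Tlam l v - P (T (P v))), Tlam l v - P (T (P v))⟫_ℝ) ≤
        ε * Real.sqrt (‖v‖ ^ 2 + l * ⟪A v, v⟫_ℝ) := by
  intro ε hε
  by_contra hcon
  push_neg at hcon
  -- abbreviations
  set Q : ℝ → E → ℝ := fun l x => ‖x‖ ^ 2 + l * ⟪A x, x⟫_ℝ with hQ
  set df : ℝ → E → E := fun l x => Tlam l x - P (T (P x)) with hdf
  have hQnn : ∀ l : ℝ, 0 ≤ l → ∀ x, 0 ≤ Q l x := fun l hl x =>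
    add_nonneg (sq_nonneg _) (mul_nonneg hl (hA_pos x))
  have hsqQ : ∀ l : ℝ, 0 ≤ l → ∀ x, Real.sqrt (Q l x) ^ 2 = Q l x := fun l hl x =>
    Real.sq_sqrt (hQnn l hl x)
  have hnormQ : ∀ l : ℝ, 0 ≤ l → ∀ x, ‖x‖ ≤ Real.sqrt (Q l x) := by
    intro l hl x
    rw [show ‖x‖ = Real.sqrt (‖x‖ ^ 2) from (Real.sqrt_sq (norm_nonneg x)).symm]
    exact Real.sqrt_le_sqrt (by simp only [hQ]; nlinarith [mul_nonneg hl (hA_pos x)])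
  have hQsmul : ∀ (l a : ℝ) (x : E), Q l (a • x) = a ^ 2 * Q l x := by
    intro l a x
    simp only [hQ, map_smul, norm_smul, inner_smul_left, inner_smul_right,
      real_inner_smul_left, real_inner_smul_right, conj_trivial, Real.norm_eq_abs,
      mul_pow, sq_abs]
    ring
  have hdfsmul : ∀ (l a : ℝ) (x : E), df l (a • x) = a • df l x := by
    intro l a x
    simp only [hdf, map_smul, smul_sub]
  -- the selection of a "bad" sequence
  have hsel : ∀ n : ℕ, ∃ l : ℝ, ((n : ℝ) + 1 ≤ l) ∧ ∃ x : E,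
      ε * Real.sqrt (Q l x) < Real.sqrt (Q l (df l x)) := by
    intro n
    obtain ⟨l, hl, x, hx⟩ := hcon ((n : ℝ) + 1) (by positivity)
    exact ⟨l, hl, x, hx⟩
  choose lam hlam u hu using hsel
  have hlampos : ∀ n, 0 < lam n := fun n => lt_of_lt_of_le (by positivity) (hlam n)
  have hlamnn : ∀ n, 0 ≤ lam n := fun n => (hlampos n).le
  have hlamtop : Tendsto lam atTop atTop :=
    tendsto_atTop_mono (fun n => le_trans (by simp) (hlam n)) tendsto_natCast_atTop_atTop
  -- normalization
  set c : ℕ → ℝ := fun n => Real.sqrt (Q (lam n) (u n)) with hc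
  have hcpos : ∀ n, 0 < c n := by
    intro n
    rcases lt_or_eq_of_le (Real.sqrt_nonneg (Q (lam n) (u n))) with h | h
    · exact h
    · exfalso
      have hQ0 : Q (lam n) (u n) = 0 := by
        have h2 := hsqQ (lam n) (hlamnn n) (u n); rw [← h2, ← h]; norm_num
      have hu0 : u n = 0 := by
        have h1 : ‖u n‖ ^ 2 = 0 := by
          have h3 := mul_nonneg (hlamnn n) (hA_pos (u n))
          have h4 : ‖u n‖ ^ 2 + lam n * ⟪A (u n), u n⟫_ℝ = 0 := hQ0
          nlinarith [sq_nonneg ‖u n‖]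
        simpa using pow_eq_zero_iff (n := 2) (by norm_num) |>.mp h1
      have h5 := hu n
      rw [hu0] at h5
      have h6 : df (lam n) (0:E) = 0 := by simp [hdf]
      rw [h6] at h5
      have h7 : Q (lam n) (0:E) = 0 := by simp [hQ]
      rw [h7, Real.sqrt_zero] at h5
      linarith
  set v : ℕ → E := fun n => (c n)⁻¹ • u n with hv
  have hQv : ∀ n, Real.sqrt (Q (lam n) (v n)) = 1 := by
    intro n
    rw [hv]
    simp only [hQsmul]
    rw [Real.sqrt_mul (sq_nonneg _), Real.sqrt_sq_eq_abs,
      abs_of_pos (inv_pos.mpr (hcpos n))]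
    exact inv_mul_cancel₀ (hcpos n).ne'
  set d : ℕ → E := fun n => df (lam n) (v n) with hd
  have hdveps : ∀ n, ε < Real.sqrt (Q (lam n) (d n)) := by
    intro n
    have h1 : d n = (c n)⁻¹ • df (lam n) (u n) := hdfsmul (lam n) ((c n)⁻¹) (u n)
    rw [h1, hQsmul, Real.sqrt_mul (sq_nonneg _), Real.sqrt_sq_eq_abs,
      abs_of_pos (inv_pos.mpr (hcpos n))]
    have := hu n
    calc ε = (c n)⁻¹ * (ε * c n) := by
          field_simp
          rw [div_self (hcpos n).ne']
      _ < (c n)⁻¹ * Real.sqrt (Q (lam n) (df (lam n) (u n))) := by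
          apply mul_lt_mul_of_pos_left _ (inv_pos.mpr (hcpos n))
          exact hu n
  have hvnorm : ∀ n, ‖v n‖ ≤ 1 := fun n => (hQv n) ▸ hnormQ (lam n) (hlamnn n) (v n)
  have hvA : ∀ n, lam n * ⟪A (v n), v n⟫_ℝ ≤ 1 := by
    intro n
    have h1 : Q (lam n) (v n) = 1 := by
      have := hsqQ (lam n) (hlamnn n) (v n); rw [hQv n] at this; simpa using this.symm
    simp only [hQ] at h1
    nlinarith [sq_nonneg ‖v n‖]
  -- key identity
  have hkey : ∀ l : ℝ, 0 ≤ l → ∀ x : E,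
      Q l (df l x) = ⟪T x, df l x⟫_ℝ - ⟪T (P x), P (df l x)⟫_ℝ := by
    intro l hl x
    have h2 : A (P (T (P x))) = 0 := (hKer _).mp (hP_mem _)
    have h1 := hrep l hl x (df l x)
    have e1 : ⟪df l x, df l x⟫_ℝ
        = ⟪Tlam l x, df l x⟫_ℝ - ⟪P (T (P x)), df l x⟫_ℝ := by
      rw [hdf]; rw [inner_sub_left]
    have e2 : ⟪A (df l x), df l x⟫_ℝ = ⟪A (Tlam l x), df l x⟫_ℝ := by
      rw [hdf, map_sub, inner_sub_left, h2, inner_zero_left, sub_zero]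
    have e3 : ⟪P (T (P x)), df l x⟫_ℝ = ⟪T (P x), P (df l x)⟫_ℝ := hP_sa _ _
    have e4 : Q l (df l x) = ⟪df l x, df l x⟫_ℝ + l * ⟪A (df l x), df l x⟫_ℝ := by
      simp only [hQ, real_inner_self_eq_norm_sq]
    rw [e4, e1, e2, ← e3]
    linarith [h1]
  -- bound on the d sequence
  set M : ℝ := ‖T‖ + ‖P‖ * ‖T‖ * ‖P‖ with hM
  have hMnn : 0 ≤ M := by positivity
  have hdM : ∀ n, Real.sqrt (Q (lam n) (d n)) ≤ M := by
    intro n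
    set s : ℝ := Real.sqrt (Q (lam n) (d n)) with hs
    have hspos : 0 < s := lt_trans hε (hdveps n)
    have hQle : Q (lam n) (d n) ≤ M * ‖d n‖ := by
      rw [hkey (lam n) (hlamnn n) (v n)]
      have b1 : ⟪T (v n), d n⟫_ℝ ≤ ‖T‖ * ‖d n‖ := by
        calc ⟪T (v n), d n⟫_ℝ ≤ ‖T (v n)‖ * ‖d n‖ := real_inner_le_norm _ _
          _ ≤ (‖T‖ * ‖v n‖) * ‖d n‖ :=
              mul_le_mul_of_nonneg_right (T.le_opNorm _) (norm_nonneg _)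
          _ ≤ (‖T‖ * 1) * ‖d n‖ := by
              apply mul_le_mul_of_nonneg_right _ (norm_nonneg _)
              exact mul_le_mul_of_nonneg_left (hvnorm n) (norm_nonneg _)
          _ = ‖T‖ * ‖d n‖ := by ring
      have b2 : -⟪T (P (v n)), P (d n)⟫_ℝ ≤ ‖P‖ * ‖T‖ * ‖P‖ * ‖d n‖ := by
        have := abs_real_inner_le_norm (T (P (v n))) (P (d n))
        have hb : ‖T (P (v n))‖ * ‖P (d n)‖ ≤ ‖P‖ * ‖T‖ * ‖P‖ * ‖d n‖ := by
          have c1 : ‖T (P (v n))‖ ≤ ‖T‖ * ‖P‖ := by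
            calc ‖T (P (v n))‖ ≤ ‖T‖ * ‖P (v n)‖ := T.le_opNorm _
              _ ≤ ‖T‖ * (‖P‖ * ‖v n‖) :=
                  mul_le_mul_of_nonneg_left (P.le_opNorm _) (norm_nonneg _)
              _ ≤ ‖T‖ * (‖P‖ * 1) := by
                  apply mul_le_mul_of_nonneg_left _ (norm_nonneg _)
                  exact mul_le_mul_of_nonneg_left (hvnorm n) (norm_nonneg _)
              _ = ‖T‖ * ‖P‖ := by ring
          have c2 : ‖P (d n)‖ ≤ ‖P‖ * ‖d n‖ := P.le_opNorm _
          calc ‖T (P (v n))‖ * ‖P (d n)‖ ≤ (‖T‖ * ‖P‖) * (‖P‖ * ‖d n‖) :=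
              mul_le_mul c1 c2 (norm_nonneg _) (by positivity)
            _ = ‖P‖ * ‖T‖ * ‖P‖ * ‖d n‖ := by ring
        nlinarith [neg_abs_le (⟪T (P (v n)), P (d n)⟫_ℝ)]
      calc ⟪T (v n), d n⟫_ℝ - ⟪T (P (v n)), P (d n)⟫_ℝ
          ≤ ‖T‖ * ‖d n‖ + ‖P‖ * ‖T‖ * ‖P‖ * ‖d n‖ := by linarith
        _ = M * ‖d n‖ := by rw [hM]; ring
    have hss : s * s ≤ M * s := by
      have h1 : s * s = Q (lam n) (d n) := by
        rw [hs, ← sq]; exact hsqQ (lam n) (hlamnn n) (d n)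
      have h2 : ‖d n‖ ≤ s := hnormQ (lam n) (hlamnn n) (d n)
      calc s * s = Q (lam n) (d n) := h1
        _ ≤ M * ‖d n‖ := hQle
        _ ≤ M * s := mul_le_mul_of_nonneg_left h2 hMnn
    exact (mul_le_mul_iff_left₀ hspos).mp hss
  have hdnorm : ∀ n, ‖d n‖ ≤ M := fun n =>
    le_trans (hnormQ (lam n) (hlamnn n) (d n)) (hdM n)
  have hdA : ∀ n, lam n * ⟪A (d n), d n⟫_ℝ ≤ M ^ 2 := by
    intro n
    have h1 : Q (lam n) (d n) ≤ M ^ 2 := by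
      have := hsqQ (lam n) (hlamnn n) (d n)
      nlinarith [hdM n, Real.sqrt_nonneg (Q (lam n) (d n))]
    simp only [hQ] at h1
    nlinarith [sq_nonneg ‖d n‖]
  -- weak subsequential limits
  obtain ⟨v₀, φ₁, hφ₁, hw₁⟩ := weak_bw v 1 hvnorm
  obtain ⟨d₀, φ₂, hφ₂, hw₂⟩ := weak_bw (fun n => d (φ₁ n)) M (fun n => hdnorm _)
  set ψ : ℕ → ℕ := φ₁ ∘ φ₂ with hψ
  have hψmono : StrictMono ψ := hφ₁.comp hφ₂
  set V : ℕ → E := fun n => v (ψ n) with hV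
  set D : ℕ → E := fun n => d (ψ n) with hD
  set lm : ℕ → ℝ := fun n => lam (ψ n) with hlm
  have hwV : ∀ w : E, Tendsto (fun n => ⟪V n, w⟫_ℝ) atTop (nhds ⟪v₀, w⟫_ℝ) :=
    fun w => (hw₁ w).comp hφ₂.tendsto_atTop
  have hwD : ∀ w : E, Tendsto (fun n => ⟪D n, w⟫_ℝ) atTop (nhds ⟪d₀, w⟫_ℝ) := hw₂
  have hlmtop : Tendsto lm atTop atTop := hlamtop.comp hψmono.tendsto_atTop
  have hlmpos : ∀ n, 0 < lm n := fun n => hlampos _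
  -- the quadratic forms along A tend to zero
  have hAV0 : Tendsto (fun n => ⟪A (V n), V n⟫_ℝ) atTop (nhds 0) := by
    apply squeeze_zero (fun n => hA_pos (V n)) (fun n => ?_)
      (Tendsto.comp tendsto_inv_atTop_zero hlmtop)
    have h := hvA (ψ n)
    have hp := hlmpos n
    show ⟪A (V n), V n⟫_ℝ ≤ (lm n)⁻¹
    rw [inv_eq_one_div, le_div_iff₀ hp, mul_comm]
    exact h
  have hAD0 : Tendsto (fun n => ⟪A (D n), D n⟫_ℝ) atTop (nhds 0) := by
    have hg : Tendsto (fun n : ℕ => M ^ 2 * (lm n)⁻¹) atTop (nhds 0) := by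
      have := (Tendsto.comp tendsto_inv_atTop_zero hlmtop).const_mul (M ^ 2)
      simpa using this
    apply squeeze_zero (fun n => hA_pos (D n)) (fun n => ?_) hg
    have h := hdA (ψ n)
    have hp := hlmpos n
    rw [mul_comm (M ^ 2), inv_mul_eq_div, le_div_iff₀ hp, mul_comm]
    exact h
  -- kernel membership of the weak limits
  have hkerlim : ∀ (z : ℕ → E) (z₀ : E),
      (∀ w : E, Tendsto (fun n => ⟪z n, w⟫_ℝ) atTop (nhds ⟪z₀, w⟫_ℝ)) →
      Tendsto (fun n => ⟪A (z n), z n⟫_ℝ) atTop (nhds 0) → z₀ ∈ K := by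
    intro z z₀ hwz hAz
    rw [hKer]
    rw [← @inner_self_eq_zero ℝ]
    have hconv1 : Tendsto (fun n => ⟪z n, A (A z₀)⟫_ℝ) atTop (nhds ⟪A z₀, A z₀⟫_ℝ) := by
      have := hwz (A (A z₀))
      have he : ⟪z₀, A (A z₀)⟫_ℝ = ⟪A z₀, A z₀⟫_ℝ := (hA_sa z₀ (A z₀)).symm
      rwa [he] at this
    have hconv2 : Tendsto (fun n => ⟪z n, A (A z₀)⟫_ℝ) atTop (nhds 0) := by
      refine squeeze_zero_norm
        (a := fun n => Real.sqrt (⟪A (z n), z n⟫_ℝ * ⟪A (A z₀), A z₀⟫_ℝ))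
        (fun n => ?_) ?_
      · have h1 : ⟪z n, A (A z₀)⟫_ℝ = ⟪A (z n), A z₀⟫_ℝ := (hA_sa (z n) (A z₀)).symm
        rw [Real.norm_eq_abs, h1, ← Real.sqrt_sq_eq_abs]
        apply Real.sqrt_le_sqrt
        exact semi_cs A hA_sa hA_pos (z n) (A z₀)
      · have hc2 : Tendsto (fun n => ⟪A (z n), z n⟫_ℝ * ⟪A (A z₀), A z₀⟫_ℝ)
            atTop (nhds 0) := by simpa using hAz.mul_const _
        have := (Real.continuous_sqrt.tendsto 0).comp hc2
        simpa [Function.comp_def] using this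
    exact tendsto_nhds_unique hconv1 hconv2
  have hv₀K : v₀ ∈ K := hkerlim V v₀ hwV hAV0
  have hd₀K : d₀ ∈ K := hkerlim D d₀ hwD hAD0
  -- strong convergence via (J₅)
  have hQVb : ∀ n, Real.sqrt (‖V n‖ ^ 2 + lm n * ⟪A (V n), V n⟫_ℝ) ≤ 1 :=
    fun n => le_of_eq (hQv (ψ n))
  have hTV : Tendsto (fun n => T (V n)) atTop (nhds (T v₀)) :=
    hJ5 lm V v₀ 1 hlmtop hQVb hwV
  have hTPV : Tendsto (fun n => T (P (V n))) atTop (nhds (T v₀)) := by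
    apply hJ5 lm (fun n => P (V n)) v₀ ‖P‖ hlmtop
    · intro n
      have hA0 : A (P (V n)) = 0 := (hKer _).mp (hP_mem _)
      rw [hA0]
      simp only [inner_zero_left, mul_zero, add_zero]
      rw [Real.sqrt_sq (norm_nonneg _)]
      calc ‖P (V n)‖ ≤ ‖P‖ * ‖V n‖ := P.le_opNorm _
        _ ≤ ‖P‖ * 1 := mul_le_mul_of_nonneg_left (hvnorm (ψ n)) (norm_nonneg _)
        _ = ‖P‖ := mul_one _
    · intro w
      have h1 : ∀ n, ⟪P (V n), w⟫_ℝ = ⟪V n, P w⟫_ℝ := fun n => hP_sa _ _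
      have h2 : ⟪v₀, P w⟫_ℝ = ⟪v₀, w⟫_ℝ := by
        rw [← hP_sa, hP_id v₀ hv₀K]
      simp only [h1]
      rw [← h2]
      exact hwV (P w)
  -- the contradiction
  have hGen : ∀ n, ε ^ 2 < ⟪T (V n), D n⟫_ℝ - ⟪T (P (V n)), P (D n)⟫_ℝ := by
    intro n
    have h1 : Q (lm n) (D n) = ⟪T (V n), D n⟫_ℝ - ⟪T (P (V n)), P (D n)⟫_ℝ :=
      hkey (lm n) (hlmpos n).le (V n)
    have h2 : ε < Real.sqrt (Q (lm n) (D n)) := hdveps (ψ n)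
    have h3 : ε ^ 2 < Real.sqrt (Q (lm n) (D n)) ^ 2 := by
      apply pow_lt_pow_left₀ h2 hε.le
      · norm_num
    rw [hsqQ (lm n) (hlmpos n).le (D n), h1] at h3
    exact h3
  have hG0 : Tendsto
      (fun n => ⟪T (V n), D n⟫_ℝ - ⟪T (P (V n)), P (D n)⟫_ℝ) atTop (nhds 0) := by
    have ha : Tendsto (fun n => ⟪T (V n) - T v₀, D n⟫_ℝ) atTop (nhds 0) := by
      refine squeeze_zero_norm (a := fun n => ‖T (V n) - T v₀‖ * M) (fun n => ?_) ?_
      · rw [Real.norm_eq_abs]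
        calc |⟪T (V n) - T v₀, D n⟫_ℝ| ≤ ‖T (V n) - T v₀‖ * ‖D n‖ :=
            abs_real_inner_le_norm _ _
          _ ≤ ‖T (V n) - T v₀‖ * M :=
            mul_le_mul_of_nonneg_left (hdnorm (ψ n)) (norm_nonneg _)
      · have h1 : Tendsto (fun n => ‖T (V n) - T v₀‖) atTop (nhds 0) :=
          tendsto_iff_norm_sub_tendsto_zero.mp hTV
        have h2 := h1.mul_const M
        rw [zero_mul] at h2
        exact h2
    have hb : Tendsto (fun n => ⟪T v₀, D n⟫_ℝ) atTop (nhds ⟪d₀, T v₀⟫_ℝ) := by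
      have h0 := hwD (T v₀)
      have h1 : (fun n => ⟪T v₀, D n⟫_ℝ) = fun n => ⟪D n, T v₀⟫_ℝ := by
        funext n; exact real_inner_comm _ _
      rw [h1]
      exact h0
    have hc' : Tendsto (fun n => ⟪T (P (V n)) - T v₀, P (D n)⟫_ℝ) atTop (nhds 0) := by
      refine squeeze_zero_norm (a := fun n => ‖T (P (V n)) - T v₀‖ * (‖P‖ * M))
        (fun n => ?_) ?_
      · rw [Real.norm_eq_abs]
        calc |⟪T (P (V n)) - T v₀, P (D n)⟫_ℝ| ≤ ‖T (P (V n)) - T v₀‖ * ‖P (D n)‖ :=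
            abs_real_inner_le_norm _ _
          _ ≤ ‖T (P (V n)) - T v₀‖ * (‖P‖ * M) := by
              apply mul_le_mul_of_nonneg_left _ (norm_nonneg _)
              calc ‖P (D n)‖ ≤ ‖P‖ * ‖D n‖ := P.le_opNorm _
                _ ≤ ‖P‖ * M := mul_le_mul_of_nonneg_left (hdnorm (ψ n)) (norm_nonneg _)
      · have h1 : Tendsto (fun n => ‖T (P (V n)) - T v₀‖) atTop (nhds 0) :=
          tendsto_iff_norm_sub_tendsto_zero.mp hTPV
        have h2 := h1.mul_const (‖P‖ * M)
        rw [zero_mul] at h2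
        exact h2
    have he : Tendsto (fun n => ⟪T v₀, P (D n)⟫_ℝ) atTop (nhds ⟪d₀, T v₀⟫_ℝ) := by
      have h1 : ∀ n, ⟪T v₀, P (D n)⟫_ℝ = ⟪D n, P (T v₀)⟫_ℝ := by
        intro n
        rw [← hP_sa, real_inner_comm]
      have h2 : ⟪d₀, P (T v₀)⟫_ℝ = ⟪d₀, T v₀⟫_ℝ := by
        rw [← hP_sa, hP_id d₀ hd₀K]
      simp only [h1]
      rw [← h2]
      exact hwD (P (T v₀))
    have hdecomp : ∀ n, ⟪T (V n), D n⟫_ℝ - ⟪T (P (V n)), P (D n)⟫_ℝ =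
        (⟪T (V n) - T v₀, D n⟫_ℝ + ⟪T v₀, D n⟫_ℝ) -
        (⟪T (P (V n)) - T v₀, P (D n)⟫_ℝ + ⟪T v₀, P (D n)⟫_ℝ) := by
      intro n
      rw [inner_sub_left, inner_sub_left]
      ring
    have := (ha.add hb).sub (hc'.add he)
    simp only [← hdecomp] at this
    simpa using this
  have hfinal : ε ^ 2 ≤ 0 :=
    ge_of_tendsto hG0 (Eventually.of_forall fun n => (hGen n).le)
  nlinarith [hfinal, hε]
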